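/- For every finite set W ⊆ ℤ with |W| = k ≥ 1 and every integer n ≥ 1, there exists an (n,W)-universal graph of size at most n^k. -/

import Mathlib

open Filter

open Topology


/-- A finite path: a list of consecutive edges, all belonging to `E`,
starting at `u` (when nonempty). -/
def FinPath {V : Type} (E : Set (V × ℤ × V)) (u : V) (p : List (V × ℤ × V)) : Prop :=
  (∀ e ∈ p, e ∈ E) ∧ List.Chain' (fun e e' => e.2.2 = e'.1) p ∧
    ∀ h : p ≠ [], (p.head h).1 = u

/-- The last vertex of a finite path starting at `u` (which is `u` itself for the empty path). -/
def lastV {V : Type} (u : V) (p : List (V × ℤ × V)) : V :=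
  (p.getLastD (u, 0, u)).2.2

/-- An infinite path: a sequence of consecutive edges, all belonging to `E`. -/
def InfPath {V : Type} (E : Set (V × ℤ × V)) (π : ℕ → V × ℤ × V) : Prop :=
  (∀ i, π i ∈ E) ∧ ∀ i, (π i).2.2 = (π (i + 1)).1

/-- The total weight of a finite path. -/
def pathWeight {V : Type} (p : List (V × ℤ × V)) : ℤ :=
  (p.map fun e => e.2.1).sum

/-- A sequence of integer weights satisfies mean payoff if the liminf of the
averages of its prefixes is nonnegative. -/
def MeanPayoffSeq (w : ℕ → ℤ) : Prop :=
  0 ≤ Filter.atTop.liminf (fun ℓ : ℕ => (∑ i ∈ Finset.range ℓ, (w i : ℝ)) / (ℓ : ℝ))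

/-- A graph (given by its edge set) satisfies mean payoff if all its infinite paths do. -/
def SatMP {V : Type} (E : Set (V × ℤ × V)) : Prop :=
  ∀ π : ℕ → V × ℤ × V, InfPath E π → MeanPayoffSeq (fun i => (π i).2.1)

/-- A cycle: a nonempty finite path whose first and last vertices coincide. -/
def IsCycle {V : Type} (E : Set (V × ℤ × V)) (p : List (V × ℤ × V)) : Prop :=
  p ≠ [] ∧ ∃ v, FinPath E v p ∧ lastV v p = v

/-- A `W`-graph: a finite set of vertices, edges labelled by weights in `W`,
and an initial vertex from which every vertex is reachable. -/
structure WGraph (W : Finset ℤ) where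
  V : Type
  fin : Fintype V
  E : Set (V × ℤ × V)
  init : V
  wt : ∀ e ∈ E, e.2.1 ∈ W
  reach : ∀ v : V, ∃ p, FinPath E init p ∧ lastV init p = v

attribute [instance] WGraph.fin

/-- The `W`-linear graph on a set `A ⊆ ℤ`: vertices are the elements of `A`, and
for `v, v' ∈ A` and `w ∈ W` there is an edge `(v, w, v')` whenever `v' - v ≤ w`. -/
def LinE (W : Finset ℤ) (A : Set ℤ) : Set (ℤ × ℤ × ℤ) :=
  {e | e.1 ∈ A ∧ e.2.2 ∈ A ∧ e.2.1 ∈ W ∧ e.2.2 - e.1 ≤ e.2.1}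

/-- A homomorphism of labelled graphs (no requirement on initial vertices). -/
def IsHom {V U : Type} (E : Set (V × ℤ × V)) (E' : Set (U × ℤ × U)) (φ : V → U) : Prop :=
  ∀ e ∈ E, (φ e.1, e.2.1, φ e.2.2) ∈ E'

/-- A graph (given by its edge set) is `(n,W)`-universal if it satisfies mean payoff and
every `(n,W)`-graph satisfying mean payoff admits a homomorphism into it. -/
def Universal (n : ℕ) (W : Finset ℤ) {U : Type} (EU : Set (U × ℤ × U)) : Prop :=
  SatMP EU ∧
    ∀ G : WGraph W, Fintype.card G.V ≤ n → SatMP G.E → ∃ φ : G.V → U, IsHom G.E EU φ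

/-- The set of weights `(-N, N)`: integers `w` with `-N < w < N`. -/
noncomputable def Wball (N : ℕ) : Finset ℤ := Finset.Ioo (-(N : ℤ)) (N : ℤ)

/-- `φ` is the distance function from the initial vertex: `φ v` is the minimum total
weight of a finite path from the initial vertex to `v`. -/
def IsDistFrom {W : Finset ℤ} (G : WGraph W) (φ : G.V → ℤ) : Prop :=
  ∀ v : G.V,
    (∃ p, FinPath G.E G.init p ∧ lastV G.init p = v ∧ pathWeight p = φ v) ∧
    ∀ p, FinPath G.E G.init p → lastV G.init p = v → φ v ≤ pathWeight p

section PathLemmas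

variable {V : Type} {E : Set (V × ℤ × V)}

lemma lastV_nil (u : V) : lastV u ([] : List (V × ℤ × V)) = u := rfl

lemma pathWeight_append (p q : List (V × ℤ × V)) :
    pathWeight (p ++ q) = pathWeight p + pathWeight q := by
  simp [pathWeight]

lemma lastV_eq_getLast (u : V) (p : List (V × ℤ × V)) (h : p ≠ []) :
    lastV u p = (p.getLast h).2.2 := by
  simp [lastV, List.getLastD_eq_getLast?, List.getLast?_eq_getLast h]

lemma lastV_append (u : V) (p q : List (V × ℤ × V)) :
    lastV u (p ++ q) = lastV (lastV u p) q := by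
  rcases eq_or_ne q [] with rfl | hq
  · simp [lastV]
  · have h : p ++ q ≠ [] := by simp [hq]
    rw [lastV_eq_getLast u _ h, lastV_eq_getLast (lastV u p) q hq, List.getLast_append_of_ne_nil]

lemma finPath_append {u : V} {p q : List (V × ℤ × V)} :
    FinPath E u (p ++ q) ↔ FinPath E u p ∧ FinPath E (lastV u p) q := by
  rw [FinPath, FinPath, FinPath]; simp only [List.Chain']; rw [List.isChain_append]
  constructor
  · rintro ⟨hmem, ⟨hc1, hc2, hc3⟩, hhead⟩
    refine ⟨⟨fun e he => hmem e (by simp [he]), hc1, fun hp => ?_⟩,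
            ⟨fun e he => hmem e (by simp [he]), hc2, fun hq => ?_⟩⟩
    · have h := hhead (by simp [hp])
      rwa [List.head_append_of_ne_nil hp] at h
    · rcases eq_or_ne p [] with rfl | hp
      · exact hhead (by simpa using hq)
      · have h3 := hc3 (p.getLast hp) (by simp [List.getLast?_eq_getLast hp])
          (q.head hq) (by simp [List.head?_eq_head hq])
        rw [lastV_eq_getLast u p hp]
        exact h3.symm
  · rintro ⟨⟨hm1, hc1, hh1⟩, ⟨hm2, hc2, hh2⟩⟩
    refine ⟨fun e he => ?_, ⟨hc1, hc2, fun x hx y hy => ?_⟩, fun h => ?_⟩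
    · rcases List.mem_append.mp he with h | h
      exacts [hm1 e h, hm2 e h]
    · have hp : p ≠ [] := by rintro rfl; simp at hx
      have hq : q ≠ [] := by rintro rfl; simp at hy
      rw [List.getLast?_eq_getLast hp] at hx
      rw [List.head?_eq_head hq] at hy
      obtain rfl : x = p.getLast hp := by simpa using hx.symm
      obtain rfl : y = q.head hq := by simpa using hy.symm
      rw [← lastV_eq_getLast u p hp]
      exact (hh2 hq).symm
    · rcases eq_or_ne p [] with rfl | hp
      · have hq : q ≠ [] := by simpa using h
        exact hh2 hq
      · rw [List.head_append_of_ne_nil hp]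
        exact hh1 hp

lemma finPath_take {u : V} {p : List (V × ℤ × V)} (hp : FinPath E u p) (i : ℕ) :
    FinPath E u (p.take i) := by
  have := finPath_append (E := E) (u := u) (p := p.take i) (q := p.drop i)
  rw [List.take_append_drop] at this
  exact (this.mp hp).1

lemma finPath_drop {u : V} {p : List (V × ℤ × V)} (hp : FinPath E u p) (i : ℕ) :
    FinPath E (lastV u (p.take i)) (p.drop i) := by
  have := finPath_append (E := E) (u := u) (p := p.take i) (q := p.drop i)
  rw [List.take_append_drop] at this
  exact (this.mp hp).2

lemma lastV_take_drop (u : V) (p : List (V × ℤ × V)) (i : ℕ) :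
    lastV u p = lastV (lastV u (p.take i)) (p.drop i) := by
  conv_lhs => rw [← List.take_append_drop i p]
  exact lastV_append _ _ _

lemma getElem_fst {u : V} {p : List (V × ℤ × V)} (hp : FinPath E u p) {j : ℕ}
    (h : j < p.length) : (p[j]).1 = lastV u (p.take j) := by
  have hd : p.drop j ≠ [] := by
    intro hcon
    have := List.drop_eq_nil_iff.mp hcon
    omega
  have h2 := (finPath_drop hp j).2.2 hd
  rwa [List.head_drop] at h2

lemma getElem_snd (u : V) {p : List (V × ℤ × V)} {j : ℕ}
    (h : j < p.length) : (p[j]).2.2 = lastV u (p.take (j + 1)) := by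
  rw [← List.take_concat_get h, List.concat_eq_append, lastV_append]
  simp [lastV]

end PathLemmas

lemma liminfA (S : ℕ → ℝ) (C D : ℝ) (hC : 0 ≤ C)
    (hS : ∀ ℓ : ℕ, 0 < ℓ → -C ≤ S ℓ) (hD : ∀ ℓ : ℕ, 0 < ℓ → S ℓ ≤ D * ℓ) :
    0 ≤ atTop.liminf (fun ℓ : ℕ => S ℓ / (ℓ : ℝ)) := by
  have h1 : Tendsto (fun ℓ : ℕ => -C / (ℓ : ℝ)) atTop (𝓝 0) := by
    simpa using tendsto_const_div_atTop_nhds_zero_nat (-C)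
  rw [← h1.liminf_eq]
  apply liminf_le_liminf
  · filter_upwards [eventually_gt_atTop 0] with ℓ hℓ
    have hpos : (0:ℝ) < ℓ := by exact_mod_cast hℓ
    gcongr
    exact hS ℓ hℓ
  · apply isBoundedUnder_of
    refine ⟨-C, fun ℓ => ?_⟩
    rcases Nat.eq_zero_or_pos ℓ with rfl | hℓ
    · simp; linarith
    · have hpos : (0:ℝ) < ℓ := by exact_mod_cast hℓ
      have h2 : C / ℓ ≤ C := by
        rw [div_le_iff₀ hpos]
        nlinarith [(Nat.one_le_cast (α := ℝ)).mpr hℓ]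
      simp only [neg_div] at *
      linarith
  · apply Filter.IsBoundedUnder.isCoboundedUnder_ge
    apply isBoundedUnder_of
    refine ⟨max D 0, fun ℓ => ?_⟩
    rcases Nat.eq_zero_or_pos ℓ with rfl | hℓ
    · simp
    · have hpos : (0:ℝ) < ℓ := by exact_mod_cast hℓ
      have := hD ℓ hℓ
      calc S ℓ / ℓ ≤ D * ℓ / ℓ := by gcongr
        _ = D := by field_simp
        _ ≤ max D 0 := le_max_left _ _

lemma liminfB (w : ℕ → ℤ) (M : ℤ) (hM : ∀ i, |w i| ≤ M) (m : ℕ) (hm : 0 < m)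
    (S : ℤ) (hS : ∀ q : ℕ, (∑ i ∈ Finset.range (q * m), w i) = q * S)
    (h0 : 0 ≤ atTop.liminf (fun ℓ : ℕ => (∑ i ∈ Finset.range ℓ, (w i : ℝ)) / (ℓ : ℝ))) :
    0 ≤ S := by
  set f : ℕ → ℝ := fun ℓ => (∑ i ∈ Finset.range ℓ, (w i : ℝ)) / (ℓ : ℝ) with hf
  set g : ℕ → ℕ := fun q => q * m with hg
  have hgt : Tendsto g atTop atTop :=
    tendsto_atTop_mono (fun q => Nat.le_mul_of_pos_right q hm) tendsto_id
  have hcomp : ∀ q : ℕ, 0 < q → f (g q) = (S : ℝ) / (m : ℝ) := by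
    intro q hq
    have hsum : (∑ i ∈ Finset.range (q * m), (w i : ℝ)) = (q : ℝ) * (S : ℝ) := by
      have := hS q
      push_cast [← this]
      norm_cast
    simp only [hf, hg, hsum]
    rw [Nat.cast_mul]
    rw [mul_div_mul_left _ _ (by exact_mod_cast hq.ne' : (q:ℝ) ≠ 0)]
  have htt : Tendsto (f ∘ g) atTop (𝓝 ((S : ℝ) / (m : ℝ))) := by
    apply Tendsto.congr' _ tendsto_const_nhds
    filter_upwards [eventually_gt_atTop 0] with q hq
    exact (hcomp q hq).symm
  have hmapne : (Filter.map g atTop).NeBot := Filter.map_neBot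
  have hb1 : IsBoundedUnder (· ≥ ·) atTop f := by
    apply isBoundedUnder_of
    refine ⟨-(M : ℝ), fun ℓ => ?_⟩
    simp only [hf]
    rcases Nat.eq_zero_or_pos ℓ with rfl | hℓ
    · have hM0 : (0:ℤ) ≤ M := le_trans (abs_nonneg _) (hM 0)
      simp
      exact_mod_cast hM0
    · have hpos : (0:ℝ) < ℓ := by exact_mod_cast hℓ
      have hlow : -((M:ℝ) * ℓ) ≤ ∑ i ∈ Finset.range ℓ, (w i : ℝ) := by
        have : ∀ i ∈ Finset.range ℓ, -(M:ℝ) ≤ (w i : ℝ) := by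
          intro i _
          have h' : -M ≤ w i := (abs_le.mp (hM i)).1
          exact_mod_cast h'
        calc -((M:ℝ) * ℓ) = ∑ _i ∈ Finset.range ℓ, -(M:ℝ) := by
              simp [mul_comm]
          _ ≤ _ := Finset.sum_le_sum this
      rw [ge_iff_le, le_div_iff₀ hpos]
      linarith
  have hcb : IsCoboundedUnder (· ≥ ·) (Filter.map g atTop) f := by
    have : Tendsto f (Filter.map g atTop) (𝓝 ((S : ℝ) / (m : ℝ))) := by
      rwa [Filter.tendsto_map'_iff]
    exact this.isCoboundedUnder_ge
  have hle : atTop.liminf f ≤ liminf f (Filter.map g atTop) :=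
    liminf_le_liminf_of_le hgt hb1 hcb
  have heq : liminf f (Filter.map g atTop) = (S : ℝ) / (m : ℝ) := by
    have : liminf f (Filter.map g atTop) = liminf (f ∘ g) atTop := rfl
    rw [this, htt.liminf_eq]
  rw [heq] at hle
  have hfin : (0:ℝ) ≤ (S : ℝ) / (m : ℝ) := le_trans h0 hle
  have hmpos : (0:ℝ) < (m : ℝ) := by exact_mod_cast hm
  have := (div_nonneg_iff.mp hfin)
  rcases this with ⟨h, _⟩ | ⟨_, h⟩
  · exact_mod_cast h
  · nlinarith
lemma cycle_nonneg {V : Type} {E : Set (V × ℤ × V)} (hMP : SatMP E) {v : V}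
    {p : List (V × ℤ × V)} (hp : FinPath E v p) (hlast : lastV v p = v) (hne : p ≠ []) :
    0 ≤ pathWeight p := by
  have hm0 : 0 < p.length := List.length_pos_iff.mpr hne
  set m := p.length with hmdef
  set π : ℕ → V × ℤ × V := fun i => p[i % m]'(Nat.mod_lt i hm0) with hπ
  have hvtx : ∀ i : ℕ, (π i).2.2 = (π (i + 1)).1 := by
    intro i
    have h1 : (π i).2.2 = lastV v (p.take (i % m + 1)) := getElem_snd v _
    have h2 : (π (i + 1)).1 = lastV v (p.take ((i + 1) % m)) := getElem_fst hp _
    rw [h1, h2]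
    rcases lt_or_eq_of_le (Nat.succ_le_of_lt (Nat.mod_lt i hm0)) with hlt | heq
    · have hmod : (i + 1) % m = i % m + 1 := by
        have hm2 : 1 % m = 1 := Nat.mod_eq_of_lt (by omega)
        rw [Nat.add_mod, hm2, Nat.mod_eq_of_lt hlt]
      rw [hmod]
    · have heq' : i % m + 1 = m := heq
      have h3 : (i + 1) % m = 0 := by
        rw [← Nat.mod_add_mod, heq', Nat.mod_self]
      rw [heq', h3]
      have h4 : p.take m = p := by
        rw [hmdef, List.take_length]
      rw [h4]
      simp [hlast, lastV_nil]
  have hinf : InfPath E π := ⟨fun i => hp.1 _ (List.getElem_mem _), hvtx⟩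
  have h0 := hMP π hinf
  set w : ℕ → ℤ := fun i => (π i).2.1 with hw
  set M : ℤ := (p.map (fun e => |e.2.1|)).sum with hM
  have hMb : ∀ i, |w i| ≤ M := by
    intro i
    have hmem : |(p[i % m]'(Nat.mod_lt i hm0)).2.1| ∈ p.map (fun e => |e.2.1|) :=
      List.mem_map.mpr ⟨_, List.getElem_mem _, rfl⟩
    have hpos : ∀ x ∈ p.map (fun e => |e.2.1|), 0 ≤ x := by
      intro x hx
      obtain ⟨e, -, rfl⟩ := List.mem_map.mp hx
      exact abs_nonneg _
    exact List.single_le_sum hpos _ hmem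
  have hbase : ∀ j, j ≤ m → (∑ i ∈ Finset.range j, w i) = pathWeight (p.take j) := by
    intro j hj
    induction j with
    | zero => simp [pathWeight]
    | succ j ih =>
      rw [Finset.sum_range_succ, ih (by omega)]
      have hjm : j < m := by omega
      have hidx : j % m = j := Nat.mod_eq_of_lt hjm
      have h5 : pathWeight (p.take (j + 1)) = pathWeight (p.take j) + (p[j]'hjm).2.1 := by
        unfold pathWeight
        rw [List.map_take, List.map_take, List.sum_take_succ _ _ (by simpa using hjm),
          List.getElem_map]
      rw [h5]
      congr 1
      simp only [hw, hπ, hidx]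
  have hS : ∀ q : ℕ, (∑ i ∈ Finset.range (q * m), w i) = q * pathWeight p := by
    intro q
    induction q with
    | zero => simp
    | succ q ih =>
      have hle1 : q * m ≤ (q + 1) * m := by nlinarith
      have h1 : ∑ i ∈ Finset.range ((q + 1) * m), w i
          = ∑ i ∈ Finset.range (q * m), w i + ∑ i ∈ Finset.Ico (q * m) ((q + 1) * m), w i := by
        simp only [Finset.range_eq_Ico]
        rw [Finset.sum_Ico_consecutive _ (Nat.zero_le _) hle1]
      have h2 : ∑ i ∈ Finset.Ico (q * m) ((q + 1) * m), w i = ∑ j ∈ Finset.range m, w (q * m + j) := by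
        have hbnd : (q + 1) * m - q * m = m := by
          rw [Nat.succ_mul]
          omega
        rw [Finset.sum_Ico_eq_sum_range, hbnd]
      have h3 : ∀ j, w (q * m + j) = w j := by
        intro j
        have hidx : (q * m + j) % m = j % m := by
          rw [add_comm]
          exact Nat.add_mul_mod_self_right j q m
        simp only [hw, hπ, hidx]
      have h4 : ∑ j ∈ Finset.range m, w (q * m + j) = pathWeight p := by
        rw [Finset.sum_congr rfl (fun j _ => h3 j), hbase m le_rfl, hmdef, List.take_length]
      rw [h1, ih, h2, h4]
      push_cast
      ring
  have := liminfB w M hMb m hm0 (pathWeight p) hS h0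
  exact this

lemma shorten {V : Type} [Fintype V] {E : Set (V × ℤ × V)} (hMP : SatMP E) {n : ℕ}
    (hn : 1 ≤ n) (hcard : Fintype.card V ≤ n) :
    ∀ (p : List (V × ℤ × V)) (u : V), FinPath E u p →
      ∃ q, FinPath E u q ∧ lastV u q = lastV u p ∧ pathWeight q ≤ pathWeight p ∧
        q.length < n := by
  suffices h : ∀ (N : ℕ) (p : List (V × ℤ × V)), p.length ≤ N → ∀ u, FinPath E u p →
      ∃ q, FinPath E u q ∧ lastV u q = lastV u p ∧ pathWeight q ≤ pathWeight p ∧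
        q.length < n by
    exact fun p u hp => h p.length p le_rfl u hp
  intro N
  induction N with
  | zero =>
    intro p hp u hfp
    have hpnil : p = [] := List.length_eq_zero_iff.mp (by omega)
    subst hpnil
    exact ⟨[], hfp, rfl, le_rfl, by omega⟩
  | succ N ih =>
    intro p hlen u hfp
    by_cases hl : p.length < n
    · exact ⟨p, hfp, rfl, le_rfl, hl⟩
    · push_neg at hl
      have hcard2 : Fintype.card V < Fintype.card (Fin (p.length + 1)) := by
        simp only [Fintype.card_fin]
        omega
      obtain ⟨a, b, hab, heq⟩ := Fintype.exists_ne_map_eq_of_card_lt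
        (fun i : Fin (p.length + 1) => lastV u (p.take i)) hcard2
      have hdup : ∃ i j : ℕ, i < j ∧ j ≤ p.length ∧
          lastV u (p.take i) = lastV u (p.take j) := by
        rcases lt_or_gt_of_ne hab with h | h
        · exact ⟨a, b, h, Nat.lt_succ_iff.mp b.isLt, heq⟩
        · exact ⟨b, a, h, Nat.lt_succ_iff.mp a.isLt, heq.symm⟩
      obtain ⟨i, j, hij, hjle, hvv⟩ := hdup
      have hsplit_j_path : FinPath E u (p.take j) := finPath_take hfp j
      have hdropj : FinPath E (lastV u (p.take j)) (p.drop j) := finPath_drop hfp j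
      have hlast_j : lastV u p = lastV (lastV u (p.take j)) (p.drop j) := lastV_take_drop u p j
      have htt : (p.take j).take i = p.take i := by
        rw [List.take_take]
        congr 1
        omega
      have hmid_path : FinPath E (lastV u ((p.take j).take i)) ((p.take j).drop i) :=
        finPath_drop hsplit_j_path i
      rw [htt] at hmid_path
      have hmid_last : lastV u (p.take j) = lastV (lastV u (p.take i)) ((p.take j).drop i) := by
        have h' := lastV_take_drop u (p.take j) i
        rwa [htt] at h'
      have hmidlen : ((p.take j).drop i).length = j - i := by
        simp only [List.length_drop, List.length_take]
        omega
      have hmidne : (p.take j).drop i ≠ [] := by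
        intro hcon
        rw [hcon] at hmidlen
        simp at hmidlen
        omega
      have hmid_cycle_last : lastV (lastV u (p.take i)) ((p.take j).drop i)
          = lastV u (p.take i) := by
        rw [← hmid_last, ← hvv]
      have hmidw : 0 ≤ pathWeight ((p.take j).drop i) :=
        cycle_nonneg hMP hmid_path hmid_cycle_last hmidne
      set q0 := p.take i ++ p.drop j with hq0
      have hq0path : FinPath E u q0 := by
        apply finPath_append.mpr
        refine ⟨finPath_take hfp i, ?_⟩
        rw [hvv]
        exact hdropj
      have hq0last : lastV u q0 = lastV u p := by
        rw [hq0, lastV_append, hvv, ← lastV_take_drop]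
      have e1 : pathWeight (p.take j) + pathWeight (p.drop j) = pathWeight p := by
        rw [← pathWeight_append, List.take_append_drop]
      have e2 : pathWeight (p.take i) + pathWeight ((p.take j).drop i)
          = pathWeight (p.take j) := by
        conv_rhs => rw [← List.take_append_drop i (p.take j)]
        rw [pathWeight_append, htt]
      have hq0w : pathWeight q0 ≤ pathWeight p := by
        rw [hq0, pathWeight_append]
        linarith
      have hq0len : q0.length ≤ N := by
        simp only [hq0, List.length_append, List.length_take, List.length_drop]
        omega
      obtain ⟨q, hq1, hq2, hq3, hq4⟩ := ih q0 hq0len u hq0path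
      exact ⟨q, hq1, by rw [hq2, hq0last], le_trans hq3 hq0w, hq4⟩


lemma exists_dist {W : Finset ℤ} (hWne : W.Nonempty) (G : WGraph W) {n : ℕ} (hn : 1 ≤ n)
    (hcard : Fintype.card G.V ≤ n) (hMP : SatMP G.E) :
    ∃ φ : G.V → ℤ,
      (∀ v, ∃ p, FinPath G.E G.init p ∧ lastV G.init p = v ∧ pathWeight p = φ v ∧
        p.length < n) ∧
      (∀ e ∈ G.E, φ e.2.2 ≤ φ e.1 + e.2.1) := by
  have key : ∀ v : G.V, ∃ d : ℤ,
      (∃ p, FinPath G.E G.init p ∧ lastV G.init p = v ∧ pathWeight p = d ∧ p.length < n) ∧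
      (∀ p, FinPath G.E G.init p → lastV G.init p = v → d ≤ pathWeight p) := by
    intro v
    set c : ℤ := min (W.min' hWne) 0 with hc
    have hbdd : ∃ b : ℤ, ∀ z,
        (∃ p, FinPath G.E G.init p ∧ lastV G.init p = v ∧ pathWeight p = z ∧ p.length < n)
        → b ≤ z := by
      refine ⟨(n : ℤ) * c, ?_⟩
      rintro z ⟨p, hp, hl, rfl, hlen⟩
      have hterm : ∀ x ∈ p.map (fun e => e.2.1), c ≤ x := by
        intro x hx
        obtain ⟨e, he, rfl⟩ := List.mem_map.mp hx
        have hew : e.2.1 ∈ W := G.wt e (hp.1 e he)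
        exact le_trans (min_le_left _ _) (W.min'_le _ hew)
      have h1 : (p.map (fun e => e.2.1)).length • c ≤ pathWeight p :=
        List.card_nsmul_le_sum _ _ hterm
      have hlen' : (p.map (fun e => e.2.1)).length = p.length := by simp
      rw [hlen', nsmul_eq_mul] at h1
      have hc0 : c ≤ 0 := min_le_right _ _
      have h2 : (n : ℤ) * c ≤ (p.length : ℤ) * c := by
        apply mul_le_mul_of_nonpos_right _ hc0
        exact_mod_cast le_of_lt hlen
      linarith
    have hinh : ∃ z : ℤ,
        (∃ p, FinPath G.E G.init p ∧ lastV G.init p = v ∧ pathWeight p = z ∧ p.length < n) := by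
      obtain ⟨p, hp, hl⟩ := G.reach v
      obtain ⟨q, hq1, hq2, hq3, hq4⟩ := shorten hMP hn hcard p G.init hp
      exact ⟨pathWeight q, q, hq1, by rw [hq2, hl], rfl, hq4⟩
    obtain ⟨d, hd1, hd2⟩ := Int.exists_least_of_bdd hbdd hinh
    refine ⟨d, hd1, ?_⟩
    intro p hp hl
    obtain ⟨q, hq1, hq2, hq3, hq4⟩ := shorten hMP hn hcard p G.init hp
    exact le_trans (hd2 _ ⟨q, hq1, by rw [hq2, hl], rfl, hq4⟩) hq3
  choose φ h1 h2 using key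
  refine ⟨φ, h1, ?_⟩
  intro e he
  obtain ⟨p, hp, hl, hw, hlen⟩ := h1 e.1
  have hsingle : FinPath G.E e.1 [e] := ⟨by simpa using he, List.isChain_singleton _, fun h => rfl⟩
  have happ : FinPath G.E G.init (p ++ [e]) := by
    apply finPath_append.mpr
    refine ⟨hp, ?_⟩
    rw [hl]
    exact hsingle
  have hlast : lastV G.init (p ++ [e]) = e.2.2 := by
    rw [lastV_append]
    simp [lastV]
  have h3 := h2 e.2.2 (p ++ [e]) happ hlast
  rw [pathWeight_append] at h3
  simp only [pathWeight, List.map_cons, List.map_nil, List.sum_cons, List.sum_nil,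
    add_zero] at h3
  rw [show (List.map (fun e => e.2.1) p).sum = pathWeight p from rfl, hw] at h3
  linarith



lemma sum_mem_coeff (n : ℕ) (W : Finset ℤ) (l : List ℤ) (hl : ∀ x ∈ l, x ∈ W)
    (hlen : l.length < n) :
    ∃ c : {x // x ∈ W} → Fin n, (∑ w : {x // x ∈ W}, ((c w : ℕ) : ℤ) * (w : ℤ)) = l.sum := by
  classical
  refine ⟨fun w => ⟨l.count (w : ℤ), lt_of_le_of_lt (List.count_le_length) hlen⟩, ?_⟩
  have hA : (∑ w : {x // x ∈ W}, ((l.count (w : ℤ) : ℕ) : ℤ) * (w : ℤ))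
      = ∑ m ∈ W, (l.count m : ℤ) * m := Finset.sum_coe_sort W (fun m => (l.count m : ℤ) * m)
  have hsub : l.toFinset ⊆ W := by
    intro x hx
    exact hl x (List.mem_toFinset.mp hx)
  have hB : ∑ m ∈ l.toFinset, (l.count m : ℤ) * m = ∑ m ∈ W, (l.count m : ℤ) * m := by
    apply Finset.sum_subset hsub
    intro x _ hx
    rw [List.count_eq_zero.mpr (fun h => hx (List.mem_toFinset.mpr h))]
    simp
  rw [hA, ← hB, Finset.sum_list_count l]
  apply Finset.sum_congr rfl
  intro x _
  rw [nsmul_eq_mul]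

/-- for every finite set `W ⊆ ℤ` of `k ≥ 1` weights and every
`n ≥ 1`, there exists an `(n,W)`-universal graph of size at most `n^k`. -/
theorem universal_upper_bound_weights (n k : ℕ) (hn : 1 ≤ n) (hk : 1 ≤ k)
    (W : Finset ℤ) (hW : W.card = k) :
    ∃ (U : Type) (fU : Fintype U) (EU : Set (U × ℤ × U)),
      Universal n W EU ∧ @Fintype.card U fU ≤ n ^ k := by
  classical
  have hWne : W.Nonempty := Finset.card_pos.mp (by omega)
  set A : Finset ℤ := Finset.image
    (fun c : {x // x ∈ W} → Fin n => ∑ w : {x // x ∈ W}, ((c w : ℕ) : ℤ) * (w : ℤ))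
    Finset.univ with hA
  set EU : Set ({x // x ∈ A} × ℤ × {x // x ∈ A}) :=
    {e | e.2.1 ∈ W ∧ (e.2.2.1 : ℤ) - (e.1.1 : ℤ) ≤ e.2.1} with hEU
  refine ⟨{x // x ∈ A}, FinsetCoe.fintype A, EU, ⟨?_, ?_⟩, ?_⟩
  · -- SatMP EU
    intro π hπ
    have haA : ∀ i, ((π i).1 : ℤ) ∈ A := fun i => (π i).1.2
    have hAne : A.Nonempty := ⟨_, haA 0⟩
    have hstep : ∀ i, ((π (i + 1)).1 : ℤ) - ((π i).1 : ℤ) ≤ (π i).2.1 := by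
      intro i
      have h := (hπ.1 i).2
      have h2 := hπ.2 i
      rw [h2] at h
      exact h
    have hwW : ∀ i, (π i).2.1 ∈ W := fun i => (hπ.1 i).1
    have hZlow : ∀ ℓ : ℕ, A.min' hAne - A.max' hAne ≤ ∑ i ∈ Finset.range ℓ, (π i).2.1 := by
      intro ℓ
      have t1 : (∑ i ∈ Finset.range ℓ, (((π (i + 1)).1 : ℤ) - ((π i).1 : ℤ)))
          = ((π ℓ).1 : ℤ) - ((π 0).1 : ℤ) := Finset.sum_range_sub (fun i => ((π i).1 : ℤ)) ℓ
      have t2 : (∑ i ∈ Finset.range ℓ, (((π (i + 1)).1 : ℤ) - ((π i).1 : ℤ)))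
          ≤ ∑ i ∈ Finset.range ℓ, (π i).2.1 := Finset.sum_le_sum (fun i _ => hstep i)
      have t3 : A.min' hAne ≤ ((π ℓ).1 : ℤ) := A.min'_le _ (haA ℓ)
      have t4 : ((π 0).1 : ℤ) ≤ A.max' hAne := A.le_max' _ (haA 0)
      linarith
    have hZhigh : ∀ ℓ : ℕ, (∑ i ∈ Finset.range ℓ, (π i).2.1) ≤ (ℓ : ℤ) * W.max' hWne := by
      intro ℓ
      calc (∑ i ∈ Finset.range ℓ, (π i).2.1) ≤ ∑ _i ∈ Finset.range ℓ, W.max' hWne :=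
            Finset.sum_le_sum (fun i _ => W.le_max' _ (hwW i))
        _ = (ℓ : ℤ) * W.max' hWne := by simp [mul_comm]
    have hCnn : (0 : ℝ) ≤ (A.max' hAne : ℝ) - (A.min' hAne : ℝ) := by
      have := A.min'_le _ (A.max'_mem hAne)
      simp only [sub_nonneg]
      exact_mod_cast this
    have := liminfA (fun ℓ : ℕ => ∑ i ∈ Finset.range ℓ, ((π i).2.1 : ℝ))
      ((A.max' hAne : ℝ) - (A.min' hAne : ℝ)) (W.max' hWne : ℝ) hCnn ?_ ?_
    · exact this
    · intro ℓ _
      have h := hZlow ℓ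
      have : ((A.min' hAne - A.max' hAne : ℤ) : ℝ)
          ≤ ((∑ i ∈ Finset.range ℓ, (π i).2.1 : ℤ) : ℝ) := by exact_mod_cast h
      push_cast at this ⊢
      linarith
    · intro ℓ _
      have h := hZhigh ℓ
      have : ((∑ i ∈ Finset.range ℓ, (π i).2.1 : ℤ) : ℝ)
          ≤ (((ℓ : ℤ) * W.max' hWne : ℤ) : ℝ) := by exact_mod_cast h
      push_cast at this ⊢
      linarith
  · -- homomorphism
    intro G hGcard hGMP
    obtain ⟨φ, hφ1, hφ2⟩ := exists_dist hWne G hn hGcard hGMP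
    have hmem : ∀ v, φ v ∈ A := by
      intro v
      obtain ⟨p, hp, hl, hw, hlen⟩ := hφ1 v
      have hlW : ∀ x ∈ p.map (fun e => e.2.1), x ∈ W := by
        intro x hx
        obtain ⟨e, he, rfl⟩ := List.mem_map.mp hx
        exact G.wt e (hp.1 e he)
      have hlenl : (p.map (fun e => e.2.1)).length < n := by
        simpa using hlen
      obtain ⟨c, hc⟩ := sum_mem_coeff n W _ hlW hlenl
      rw [hA]
      apply Finset.mem_image.mpr
      refine ⟨c, Finset.mem_univ _, ?_⟩
      rw [hc, show (p.map (fun e => e.2.1)).sum = pathWeight p from rfl, hw]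
    refine ⟨fun v => ⟨φ v, hmem v⟩, ?_⟩
    intro e he
    refine ⟨G.wt e he, ?_⟩
    have := hφ2 e he
    simp only []
    omega
  · -- cardinality
    rw [Fintype.card_coe]
    calc A.card ≤ (Finset.univ : Finset ({x // x ∈ W} → Fin n)).card :=
          Finset.card_image_le
      _ = Fintype.card ({x // x ∈ W} → Fin n) := Finset.card_univ
      _ = Fintype.card (Fin n) ^ Fintype.card {x // x ∈ W} := Fintype.card_fun
      _ = n ^ k := by rw [Fintype.card_fin, Fintype.card_coe, hW]
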